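/- Hamming distance between close type classes: Let 𝒳 be a finite alphabet and Q, Q' ∈ 𝒫_n(𝒳) two types of length-n sequences with variational distance ‖Q − Q'‖ = ∑_{a∈𝒳} |Q(a) − Q'(a)| = 2d*/n for some integer d* > 0. Then for every x ∈ T_n(Q) there exists x' ∈ T_n(Q') with Hamming distance d_H(x,x') ≤ d*, i.e. min_{x' ∈ T_n(Q')} d_H(x,x') ≤ d*. -/
import Mathlib


open scoped BigOperators

noncomputable section

/-- Empirical distribution (type) of a sequence. -/
def empDist {A : Type*} [Fintype A] [DecidableEq A] {n : ℕ} (x : Fin n → A) : A → ℝ :=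
  fun a => ((Finset.univ.filter fun i => x i = a).card : ℝ) / n

/-- Type class of `Q` among length-`n` sequences. -/
def typeClass (A : Type*) [Fintype A] [DecidableEq A] (n : ℕ) (Q : A → ℝ) :
    Set (Fin n → A) := {x | empDist x = Q}

namespace HDCT

variable {A : Type*} [Fintype A] [DecidableEq A] {n : ℕ}

def cnt (x : Fin n → A) (a : A) : ℕ := (Finset.univ.filter fun i => x i = a).card

lemma sum_cnt (x : Fin n → A) : ∑ a, cnt x a = n := by
  have := Finset.card_eq_sum_card_fiberwise (s := (Finset.univ : Finset (Fin n)))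
    (t := (Finset.univ : Finset A)) (f := x) (fun i _ => Finset.mem_univ (x i))
  simpa [cnt, Finset.card_univ] using this.symm

lemma cnt_eq_sum (x : Fin n → A) (a : A) :
    cnt x a = ∑ j, if x j = a then 1 else 0 := by
  rw [cnt, Finset.card_filter]

lemma cnt_update (x : Fin n → A) (i : Fin n) (b : A) (a : A) :
    cnt (Function.update x i b) a + (if x i = a then 1 else 0)
      = cnt x a + (if b = a then 1 else 0) := by
  have h1 : cnt (Function.update x i b) a
      = ∑ j, Function.update (fun j => if x j = a then 1 else 0) i
          (if b = a then 1 else 0) j := by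
    rw [cnt_eq_sum]
    refine Finset.sum_congr rfl fun j _ => ?_
    rcases eq_or_ne j i with rfl | hj
    · rw [Function.update_self, Function.update_self]
    · rw [Function.update_of_ne hj, Function.update_of_ne hj]
  rw [h1, Finset.sum_update_of_mem (Finset.mem_univ i), cnt_eq_sum,
    ← Finset.add_sum_erase _ _ (Finset.mem_univ i), Finset.sdiff_singleton_eq_erase]
  ring

lemma key : ∀ S : ℕ, ∀ x y : Fin n → A,
    (∑ a, ((cnt x a : ℤ) - cnt y a).natAbs) ≤ S →
    ∃ x' : Fin n → A, (∀ a, cnt x' a = cnt y a) ∧ 2 * hammingDist x x' ≤ S := by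
  intro S
  induction S using Nat.strong_induction_on with
  | _ S IH =>
    intro x y hS
    by_cases h0 : ∀ a, cnt x a = cnt y a
    · exact ⟨x, h0, by simp⟩
    · push_neg at h0
      -- find a with cnt x a > cnt y a
      have hex : ∃ a, cnt y a < cnt x a := by
        by_contra hc
        push_neg at hc
        have heq := (Finset.sum_eq_sum_iff_of_le (s := Finset.univ) (fun a _ => hc a)).mp ?_
        · obtain ⟨a, ha⟩ := h0
          exact ha (le_antisymm (hc a) (heq a (Finset.mem_univ a)).ge)
        · rw [sum_cnt, sum_cnt]
      have hex' : ∃ b, cnt x b < cnt y b := by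
        by_contra hc
        push_neg at hc
        have heq := (Finset.sum_eq_sum_iff_of_le (s := Finset.univ) (fun a _ => hc a)).mp ?_
        · obtain ⟨a, ha⟩ := h0
          exact ha ((heq a (Finset.mem_univ a)).symm)
        · rw [sum_cnt, sum_cnt]
      obtain ⟨a, ha⟩ := hex
      obtain ⟨b, hb⟩ := hex'
      have hab : a ≠ b := by
        rintro rfl; exact absurd hb (not_lt.mpr ha.le)
      -- find an index i with x i = a
      have hcard : 0 < cnt x a := lt_of_le_of_lt (Nat.zero_le _) ha
      obtain ⟨i, hi⟩ : ∃ i, x i = a := by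
        obtain ⟨i, hi⟩ := Finset.card_pos.mp hcard
        exact ⟨i, (Finset.mem_filter.mp hi).2⟩
      set x₂ := Function.update x i b with hx₂
      have hcu := fun c => cnt_update x i b c
      have hca : cnt x₂ a + 1 = cnt x a := by
        have := hcu a; simpa [hi, Ne.symm hab] using this
      have hcb : cnt x₂ b = cnt x b + 1 := by
        have := hcu b
        have hxib : x i ≠ b := by rw [hi]; exact hab
        simpa [hxib] using this
      have hcother : ∀ c, c ≠ a → c ≠ b → cnt x₂ c = cnt x c := by
        intro c hc1 hc2
        have := hcu c
        have h1 : x i ≠ c := by rw [hi]; exact fun h => hc1 h.symm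
        have h2 : b ≠ c := fun h => hc2 h.symm
        simpa [h1, h2] using this
      -- new sum decreases by at least 2
      set f : A → ℕ := fun c => ((cnt x c : ℤ) - cnt y c).natAbs with hf
      set f₂ : A → ℕ := fun c => ((cnt x₂ c : ℤ) - cnt y c).natAbs with hf₂
      have hfa : f₂ a + 1 = f a := by
        have h1 : (cnt y a : ℤ) ≤ cnt x₂ a := by
          have : (cnt y a : ℤ) + 1 ≤ cnt x a := by exact_mod_cast ha
          omega
        have h2 : (cnt x₂ a : ℤ) + 1 = cnt x a := by exact_mod_cast hca
        simp only [hf₂, hf]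
        omega
      have hfb : f₂ b + 1 = f b := by
        have h1 : (cnt x b : ℤ) + 1 ≤ cnt y b := by exact_mod_cast hb
        have h2 : (cnt x₂ b : ℤ) = cnt x b + 1 := by exact_mod_cast hcb
        simp only [hf₂, hf]
        omega
      have hfo : ∀ c, c ≠ a → c ≠ b → f₂ c = f c := by
        intro c h1 h2
        simp only [hf₂, hf, hcother c h1 h2]
      have hsum : (∑ c, f₂ c) + 2 ≤ S := by
        have hbmem : b ∈ Finset.univ.erase a := Finset.mem_erase.mpr ⟨Ne.symm hab, Finset.mem_univ b⟩
        have expand : ∀ g : A → ℕ, ∑ c, g c = g a + (g b + ∑ c ∈ (Finset.univ.erase a).erase b, g c) := by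
          intro g
          rw [← Finset.add_sum_erase _ _ (Finset.mem_univ a), ← Finset.add_sum_erase _ _ hbmem]
        have hrest : ∑ c ∈ (Finset.univ.erase a).erase b, f₂ c
            = ∑ c ∈ (Finset.univ.erase a).erase b, f c := by
          refine Finset.sum_congr rfl fun c hc => ?_
          have hc' := Finset.mem_erase.mp hc
          have hc'' := Finset.mem_erase.mp hc'.2
          exact hfo c hc''.1 hc'.1
        have : (∑ c, f₂ c) + 2 = ∑ c, f c := by
          rw [expand f₂, expand f, hrest]
          omega
        calc (∑ c, f₂ c) + 2 = ∑ c, f c := this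
          _ ≤ S := hS
      have hS₂ : (∑ c, f₂ c) < S := by omega
      obtain ⟨x', hx'1, hx'2⟩ := IH (∑ c, f₂ c) hS₂ x₂ y le_rfl
      refine ⟨x', hx'1, ?_⟩
      have htri : hammingDist x x' ≤ hammingDist x x₂ + hammingDist x₂ x' :=
        hammingDist_triangle _ _ _
      have hone : hammingDist x x₂ ≤ 1 := by
        have hsub : (Finset.univ.filter fun j => x j ≠ x₂ j) ⊆ {i} := by
          intro j hj
          simp only [Finset.mem_filter] at hj
          by_contra hji
          simp only [Finset.mem_singleton] at hji
          exact hj.2 (by simp [hx₂, Function.update_of_ne hji])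
        calc hammingDist x x₂ ≤ ({i} : Finset (Fin n)).card := Finset.card_le_card hsub
          _ = 1 := Finset.card_singleton i
      omega

end HDCT

/-- **Hamming distance between close type classes.** If `Q, Q'` are types of length-`n`
sequences with variational distance `‖Q − Q'‖ = 2d*/n` for some integer `d* > 0`, then every
`x ∈ T_n(Q)` is within Hamming distance `d*` of some `x' ∈ T_n(Q')`. -/
theorem hamming_distance_close_types
    {𝓧 : Type*} [Fintype 𝓧] [DecidableEq 𝓧] {n : ℕ}
    (Q Q' : 𝓧 → ℝ)
    (hQ : ∃ x : Fin n → 𝓧, empDist x = Q) (hQ' : ∃ x : Fin n → 𝓧, empDist x = Q')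
    (dstar : ℕ) (hdstar : 0 < dstar)
    (hdist : ∑ a, |Q a - Q' a| = 2 * (dstar : ℝ) / n)
    (x : Fin n → 𝓧) (hx : x ∈ typeClass 𝓧 n Q) :
    ∃ x' : Fin n → 𝓧, x' ∈ typeClass 𝓧 n Q' ∧ hammingDist x x' ≤ dstar := by
  obtain ⟨y, hy⟩ := hQ'
  have hxQ : empDist x = Q := hx
  -- show the discrete L1 distance is at most 2 * dstar
  have hbound : (∑ a, ((HDCT.cnt x a : ℤ) - HDCT.cnt y a).natAbs) ≤ 2 * dstar := by
    rcases Nat.eq_zero_or_pos n with rfl | hn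
    · have h1 : ∀ a, HDCT.cnt x a = 0 := by intro a; simp [HDCT.cnt]
      have h2 : ∀ a, HDCT.cnt y a = 0 := by intro a; simp [HDCT.cnt]
      simp [h1, h2]
    · have hnR : (0:ℝ) < n := by exact_mod_cast hn
      have hQa : ∀ a, Q a = (HDCT.cnt x a : ℝ) / n := by
        intro a; rw [← hxQ]; rfl
      have hQ'a : ∀ a, Q' a = (HDCT.cnt y a : ℝ) / n := by
        intro a; rw [← hy]; rfl
      have hsum : (∑ a, (((HDCT.cnt x a : ℤ) - HDCT.cnt y a).natAbs : ℝ)) = 2 * dstar := by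
        have : ∀ a, |Q a - Q' a| = (((HDCT.cnt x a : ℤ) - HDCT.cnt y a).natAbs : ℝ) / n := by
          intro a
          rw [hQa, hQ'a, div_sub_div_same, abs_div, abs_of_pos hnR]
          congr 1
          rw [Nat.cast_natAbs]
          push_cast
          ring_nf
        rw [funext this, ← Finset.sum_div] at hdist
        rw [div_eq_div_iff (ne_of_gt hnR) (ne_of_gt hnR)] at hdist
        exact mul_right_cancel₀ (ne_of_gt hnR) hdist
      exact_mod_cast hsum.le
  obtain ⟨x', hx'1, hx'2⟩ := HDCT.key (2 * dstar) x y hbound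
  refine ⟨x', ?_, by omega⟩
  have : empDist x' = empDist y := by
    funext a
    simp only [empDist]
    rw [show (Finset.univ.filter fun i => x' i = a).card = HDCT.cnt x' a from rfl,
      show (Finset.univ.filter fun i => y i = a).card = HDCT.cnt y a from rfl, hx'1 a]
  rw [typeClass, Set.mem_setOf_eq, this, hy]
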